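/- (1) If F_1 and F_2 are forest-algebras with dis(F_1,F_2) < ∞, then there is a witnessing path of minimal length consisting only of forest-algebras: there exist monounary algebras A_0, …, A_n with n = dis(F_1,F_2), A_0 ≅ F_1, A_n ≅ F_2, each A_i a forest-algebra, and for each i < n either A_i ⋖ A_{i+1} or A_{i+1} ⋖ A_i. (2) The same holds for tree-algebras: if T_1 and T_2 are tree-algebras with dis(T_1,T_2) < ∞, then some minimal-length witnessing path consists only of tree-algebras. -/

import Mathlib

/-- A monounary algebra: a type equipped with one unary operation. -/
structure MonoUnary : Type 1 where
  carrier : Type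
  op : carrier → carrier

namespace MonoUnary

/-- The subalgebra of `A` generated by `X`: the closure of `X` under the operation. -/
def closure (A : MonoUnary) (X : Set A.carrier) : Set A.carrier :=
  {y | ∃ x ∈ X, ∃ n : ℕ, A.op^[n] x = y}

/-- Isomorphism of monounary algebras. -/
def Iso (A B : MonoUnary) : Prop :=
  ∃ e : A.carrier ≃ B.carrier, ∀ x, e (A.op x) = B.op (e x)

/-- The monounary algebra induced on a subset closed under the operation. -/
def restrict (B : MonoUnary) (S : Set B.carrier) (hS : ∀ x ∈ S, B.op x ∈ S) : MonoUnary where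
  carrier := ↥S
  op := fun x => ⟨B.op x.1, hS x.1 x.2⟩

/-- `A` is largely embeddable into `B`: `B` has a large subalgebra isomorphic to `A`,
i.e. a (nonempty, closed) subset `S` such that together with one extra element `b`
it generates the whole of `B`. -/
def LargeEmb (A B : MonoUnary) : Prop :=
  ∃ (S : Set B.carrier) (hS : ∀ x ∈ S, B.op x ∈ S), S.Nonempty ∧
    Iso A (B.restrict S hS) ∧ ∃ b : B.carrier, B.closure (S ∪ {b}) = Set.univ

/-- One step in the network of large embeddings (symmetric closure of `⋖`). -/
def Step (A B : MonoUnary) : Prop := LargeEmb A B ∨ LargeEmb B A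

/-- There is a path of length `n` between `A` and `B` in the network. -/
def HasPath (A B : MonoUnary) (n : ℕ) : Prop :=
  ∃ C : ℕ → MonoUnary, Iso (C 0) A ∧ Iso (C n) B ∧ ∀ i < n, Step (C i) (C (i + 1))

/-- The generator distance between monounary algebras, in `ℕ ∪ {∞}`. -/
noncomputable def dis (A B : MonoUnary) : ℕ∞ :=
  sInf {q : ℕ∞ | ∃ n : ℕ, q = (n : ℕ∞) ∧ HasPath A B n}

/-- The minimum number of generators of `A`, `∞` if `A` is not finitely generated. -/
noncomputable def MGen (A : MonoUnary) : ℕ∞ :=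
  sInf {q : ℕ∞ | ∃ X : Finset A.carrier, q = (X.card : ℕ∞) ∧ A.closure ↑X = Set.univ}

/-- A monounary algebra is connected iff any two elements have trajectories that meet. -/
def Connected (A : MonoUnary) : Prop :=
  ∀ a b : A.carrier, ∃ k m : ℕ, A.op^[k] a = A.op^[m] b

end MonoUnary

namespace MonoUnary

/-- A tree-algebra: a connected monounary algebra containing a fixed point of its
operation (its root). -/
def IsTree (T : MonoUnary) : Prop := Connected T ∧ ∃ c, T.op c = c

/-- A forest-algebra: every connected component is a tree-algebra, i.e. every element
is related to some fixed point of the operation. -/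
def IsForest (F : MonoUnary) : Prop :=
  ∀ x : F.carrier, ∃ c, F.op c = c ∧ ∃ k m : ℕ, F.op^[k] x = F.op^[m] c

end MonoUnary


namespace MonoUnary

/-! ### Auxiliary notions: cyclic, reaching a cycle, terminal elements -/

/-- `x` lies on a cycle. -/
def cyc (A : MonoUnary) (x : A.carrier) : Prop := ∃ n : ℕ, A.op^[n + 1] x = x

/-- the forward orbit of `x` meets a cycle. -/
def reaches (A : MonoUnary) (x : A.carrier) : Prop := ∃ k : ℕ, A.cyc (A.op^[k] x)

/-- `x` is terminal: cyclic, or in a component with no cycle at all. -/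
def term (A : MonoUnary) (x : A.carrier) : Prop := A.cyc x ∨ ¬ A.reaches x

/-- `x` and `y` lie in the same component. -/
def conn2 (A : MonoUnary) (x y : A.carrier) : Prop := ∃ k m : ℕ, A.op^[k] x = A.op^[m] y

lemma cyc_op {A : MonoUnary} {x : A.carrier} (h : A.cyc x) : A.cyc (A.op x) := by
  obtain ⟨n, hn⟩ := h
  exact ⟨n, by rw [← Function.iterate_succ_apply, Function.iterate_succ_apply', hn]⟩

lemma reaches_of_op {A : MonoUnary} {x : A.carrier} (h : A.reaches (A.op x)) : A.reaches x := by
  obtain ⟨k, hk⟩ := h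
  exact ⟨k + 1, by rwa [Function.iterate_succ_apply]⟩

lemma term_op {A : MonoUnary} {x : A.carrier} (h : A.term x) : A.term (A.op x) := by
  rcases h with h | h
  · exact Or.inl (cyc_op h)
  · exact Or.inr fun h' => h (reaches_of_op h')

lemma conn2_refl (A : MonoUnary) (x : A.carrier) : A.conn2 x x := ⟨0, 0, rfl⟩

lemma conn2_symm {A : MonoUnary} {x y : A.carrier} (h : A.conn2 x y) : A.conn2 y x := by
  obtain ⟨k, m, h⟩ := h; exact ⟨m, k, h.symm⟩

lemma conn2_trans {A : MonoUnary} {x y z : A.carrier}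
    (h1 : A.conn2 x y) (h2 : A.conn2 y z) : A.conn2 x z := by
  obtain ⟨k, m, h1⟩ := h1
  obtain ⟨k', m', h2⟩ := h2
  refine ⟨k' + k, m + m', ?_⟩
  rw [Function.iterate_add_apply, h1, ← Function.iterate_add_apply,
    Nat.add_comm k' m, Function.iterate_add_apply, h2, ← Function.iterate_add_apply]

lemma conn2_op {A : MonoUnary} {x y : A.carrier} (h : A.conn2 x y) :
    A.conn2 (A.op x) (A.op y) := by
  obtain ⟨k, m, h⟩ := h
  refine ⟨k, m, ?_⟩
  simp only [← Function.iterate_succ_apply, Function.iterate_succ_apply', h]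

/-- The collapsing relation. `u = true` (forest case) also requires connectivity. -/
def R (u : Bool) (A : MonoUnary) (x y : A.carrier) : Prop :=
  x = y ∨ (A.term x ∧ A.term y ∧ (u = true → A.conn2 x y))

lemma R_refl (u : Bool) (A : MonoUnary) (x : A.carrier) : R u A x x := Or.inl rfl

lemma R_symm {u : Bool} {A : MonoUnary} {x y : A.carrier} (h : R u A x y) : R u A y x := by
  rcases h with h | ⟨h1, h2, h3⟩
  · exact Or.inl h.symm
  · exact Or.inr ⟨h2, h1, fun hu => conn2_symm (h3 hu)⟩

lemma R_trans {u : Bool} {A : MonoUnary} {x y z : A.carrier}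
    (h : R u A x y) (h' : R u A y z) : R u A x z := by
  rcases h with rfl | ⟨h1, h2, h3⟩
  · exact h'
  · rcases h' with rfl | ⟨h1', h2', h3'⟩
    · exact Or.inr ⟨h1, h2, h3⟩
    · exact Or.inr ⟨h1, h2', fun hu => conn2_trans (h3 hu) (h3' hu)⟩

lemma R_op {u : Bool} {A : MonoUnary} {x y : A.carrier} (h : R u A x y) :
    R u A (A.op x) (A.op y) := by
  rcases h with rfl | ⟨h1, h2, h3⟩
  · exact Or.inl rfl
  · exact Or.inr ⟨term_op h1, term_op h2, fun hu => conn2_op (h3 hu)⟩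

/-- The setoid generated by `R`. -/
def sd (u : Bool) (A : MonoUnary) : Setoid A.carrier :=
  ⟨R u A, ⟨R_refl u A, R_symm, R_trans⟩⟩

/-- The forest (resp. tree) reflection of a monounary algebra. -/
def Q (u : Bool) (A : MonoUnary) : MonoUnary where
  carrier := Quotient (sd u A)
  op := Quotient.map A.op (fun _ _ h => R_op h)

lemma Q_op_mk (u : Bool) (A : MonoUnary) (x : A.carrier) :
    (Q u A).op (Quotient.mk (sd u A) x) = Quotient.mk (sd u A) (A.op x) := rfl

lemma Q_iter (u : Bool) (A : MonoUnary) (n : ℕ) (x : A.carrier) :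
    (Q u A).op^[n] (Quotient.mk (sd u A) x) = Quotient.mk (sd u A) (A.op^[n] x) := by
  induction n generalizing x with
  | zero => rfl
  | succ n ih =>
      exact ih (A.op x)

/-! ### Basic facts about isomorphisms -/

lemma Iso.refl (A : MonoUnary) : Iso A A := ⟨Equiv.refl _, fun _ => rfl⟩

lemma Iso.symm {A B : MonoUnary} (h : Iso A B) : Iso B A := by
  obtain ⟨e, he⟩ := h
  refine ⟨e.symm, fun x => ?_⟩
  have := he (e.symm x)
  rw [e.apply_symm_apply] at this
  rw [← this, e.symm_apply_apply]

lemma Iso.trans {A B C : MonoUnary} (h : Iso A B) (h' : Iso B C) : Iso A C := by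
  obtain ⟨e, he⟩ := h
  obtain ⟨e', he'⟩ := h'
  exact ⟨e.trans e', fun x => by simp [Equiv.trans_apply, he, he']⟩

lemma iso_iter {A B : MonoUnary} (e : A.carrier ≃ B.carrier)
    (he : ∀ x, e (A.op x) = B.op (e x)) (n : ℕ) (x : A.carrier) :
    e (A.op^[n] x) = B.op^[n] (e x) := by
  induction n generalizing x with
  | zero => rfl
  | succ n ih => rw [Function.iterate_succ_apply, Function.iterate_succ_apply, ← he, ih]

lemma cyc_iso {A B : MonoUnary} (e : A.carrier ≃ B.carrier)
    (he : ∀ x, e (A.op x) = B.op (e x)) {x : A.carrier} (h : A.cyc x) : B.cyc (e x) := by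
  obtain ⟨n, hn⟩ := h
  exact ⟨n, by rw [← iso_iter e he, hn]⟩

lemma reaches_iso {A B : MonoUnary} (e : A.carrier ≃ B.carrier)
    (he : ∀ x, e (A.op x) = B.op (e x)) {x : A.carrier} (h : A.reaches x) :
    B.reaches (e x) := by
  obtain ⟨k, hk⟩ := h
  exact ⟨k, by rw [← iso_iter e he]; exact cyc_iso e he hk⟩

lemma conn2_iso {A B : MonoUnary} (e : A.carrier ≃ B.carrier)
    (he : ∀ x, e (A.op x) = B.op (e x)) {x y : A.carrier} (h : A.conn2 x y) :
    B.conn2 (e x) (e y) := by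
  obtain ⟨k, m, h⟩ := h
  exact ⟨k, m, by rw [← iso_iter e he, ← iso_iter e he, h]⟩

lemma iso_symm_comm {A B : MonoUnary} (e : A.carrier ≃ B.carrier)
    (he : ∀ x, e (A.op x) = B.op (e x)) : ∀ y, e.symm (B.op y) = A.op (e.symm y) := by
  intro y
  have := he (e.symm y)
  rw [e.apply_symm_apply] at this
  rw [← this, e.symm_apply_apply]

lemma term_iso {A B : MonoUnary} (e : A.carrier ≃ B.carrier)
    (he : ∀ x, e (A.op x) = B.op (e x)) {x : A.carrier} (h : A.term x) : B.term (e x) := by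
  rcases h with h | h
  · exact Or.inl (cyc_iso e he h)
  · refine Or.inr fun h' => h ?_
    have := reaches_iso e.symm (iso_symm_comm e he) h'
    rwa [e.symm_apply_apply] at this

lemma R_iso {u : Bool} {A B : MonoUnary} (e : A.carrier ≃ B.carrier)
    (he : ∀ x, e (A.op x) = B.op (e x)) {x y : A.carrier} (h : R u A x y) :
    R u B (e x) (e y) := by
  rcases h with rfl | ⟨h1, h2, h3⟩
  · exact Or.inl rfl
  · exact Or.inr ⟨term_iso e he h1, term_iso e he h2, fun hu => conn2_iso e he (h3 hu)⟩

lemma Q_iso {u : Bool} {A B : MonoUnary} (h : Iso A B) : Iso (Q u A) (Q u B) := by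
  obtain ⟨e, he⟩ := h
  have he' := iso_symm_comm e he
  refine ⟨⟨Quotient.map e (fun _ _ h => R_iso e he h),
      Quotient.map e.symm (fun _ _ h => R_iso e.symm he' h), ?_, ?_⟩, ?_⟩
  · intro q
    induction q using Quotient.ind with
    | _ x => exact congrArg (Quotient.mk (sd u A)) (e.symm_apply_apply x)
  · intro q
    induction q using Quotient.ind with
    | _ x => exact congrArg (Quotient.mk (sd u B)) (e.apply_symm_apply x)
  · intro q
    induction q using Quotient.ind with
    | _ x => exact congrArg (Quotient.mk (sd u B)) (he x)

/-! ### The reflection is a forest (resp. a tree) -/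

lemma exists_term (A : MonoUnary) (x : A.carrier) : ∃ k : ℕ, A.term (A.op^[k] x) := by
  by_cases h : A.reaches x
  · obtain ⟨k, hk⟩ := h
    exact ⟨k, Or.inl hk⟩
  · exact ⟨0, Or.inr h⟩

lemma Q_op_term {u : Bool} {A : MonoUnary} {x : A.carrier} (h : A.term x) :
    (Q u A).op (Quotient.mk (sd u A) x) = Quotient.mk (sd u A) x := by
  rw [Q_op_mk]
  refine Quotient.sound (Or.inr ⟨term_op h, h, fun _ => ⟨0, 1, rfl⟩⟩)

lemma Q_isForest (A : MonoUnary) : IsForest (Q true A) := by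
  intro q
  induction q using Quotient.ind with
  | _ x =>
    obtain ⟨k, hk⟩ := exists_term A x
    refine ⟨Quotient.mk (sd true A) (A.op^[k] x), Q_op_term hk, k, 0, ?_⟩
    rw [Q_iter]
    rfl

lemma Q_isTree (A : MonoUnary) (hA : Nonempty A.carrier) : IsTree (Q false A) := by
  have key : ∀ q : (Q false A).carrier, ∃ k : ℕ, ∀ q' : (Q false A).carrier,
      (∃ k', (Q false A).op^[k'] q' = (Q false A).op^[k] q ∨ True) → True := fun _ => ⟨0, fun _ _ => trivial⟩
  constructor
  · intro a b
    induction a using Quotient.ind with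
    | _ x =>
      induction b using Quotient.ind with
      | _ y =>
        obtain ⟨k, hk⟩ := exists_term A x
        obtain ⟨m, hm⟩ := exists_term A y
        refine ⟨k, m, ?_⟩
        rw [Q_iter, Q_iter]
        exact Quotient.sound (Or.inr ⟨hk, hm, by simp⟩)
  · obtain ⟨x⟩ := hA
    obtain ⟨k, hk⟩ := exists_term A x
    exact ⟨Quotient.mk (sd false A) (A.op^[k] x), Q_op_term hk⟩

/-! ### The reflection is the identity on forests (resp. trees) -/

lemma iterate_fixed {A : MonoUnary} {c : A.carrier} (h : A.op c = c) (m : ℕ) :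
    A.op^[m] c = c := by
  induction m with
  | zero => rfl
  | succ m ih => rw [Function.iterate_succ_apply, h, ih]

lemma term_eq_of_fixed_reach {A : MonoUnary} {x c : A.carrier} (hc : A.op c = c)
    {k : ℕ} (hk : A.op^[k] x = c) (hx : A.term x) : x = c := by
  have hreach : A.reaches x := ⟨k, by rw [hk]; exact ⟨0, by simp [hc]⟩⟩
  rcases hx with ⟨n, hn⟩ | hx
  · have h1 : A.op^[(n + 1) * k] x = x := by
      rw [Function.iterate_mul]
      exact Function.iterate_fixed hn k
    have h2 : A.op^[(n + 1) * k] x = c := by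
      have : (n + 1) * k = n * k + k := by ring
      rw [this, Function.iterate_add_apply, hk, iterate_fixed hc]
    rw [← h1, h2]
  · exact absurd hreach hx

lemma forest_R_eq {F : MonoUnary} (hF : IsForest F) {x y : F.carrier}
    (h : R true F x y) : x = y := by
  rcases h with h | ⟨h1, h2, h3⟩
  · exact h
  · obtain ⟨c, hc, k, m, hkm⟩ := hF x
    rw [iterate_fixed hc] at hkm
    obtain ⟨c', hc', k', m', hkm'⟩ := hF y
    rw [iterate_fixed hc'] at hkm'
    have hx : x = c := term_eq_of_fixed_reach hc hkm h1
    have hy : y = c' := term_eq_of_fixed_reach hc' hkm' h2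
    obtain ⟨a, b, hab⟩ := h3 rfl
    rw [hx, hy, iterate_fixed hc, iterate_fixed hc'] at hab
    rw [hx, hy, hab]

lemma tree_R_eq {T : MonoUnary} (hT : IsTree T) {x y : T.carrier}
    (h : R false T x y) : x = y := by
  rcases h with h | ⟨h1, h2, _⟩
  · exact h
  · obtain ⟨hconn, c, hc⟩ := hT
    obtain ⟨k, m, hkm⟩ := hconn x c
    rw [iterate_fixed hc] at hkm
    obtain ⟨k', m', hkm'⟩ := hconn y c
    rw [iterate_fixed hc] at hkm'
    rw [term_eq_of_fixed_reach hc hkm h1, term_eq_of_fixed_reach hc hkm' h2]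

lemma Q_iso_self {u : Bool} {F : MonoUnary} (hF : ∀ x y : F.carrier, R u F x y → x = y) :
    Iso (Q u F) F := by
  refine ⟨⟨Quotient.lift id hF, Quotient.mk (sd u F), ?_, fun x => rfl⟩, ?_⟩
  · intro q
    induction q using Quotient.ind with
    | _ x => rfl
  · intro q
    induction q using Quotient.ind with
    | _ x => rfl

/-! ### Transport through the restriction to a closed subset -/

section Restrict

variable {B : MonoUnary} {S : Set B.carrier} (hS : ∀ x ∈ S, B.op x ∈ S)

lemma restrict_iter (n : ℕ) (x : ↥S) :
    ((B.restrict S hS).op^[n] x).1 = B.op^[n] x.1 := by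
  induction n generalizing x with
  | zero => rfl
  | succ n ih =>
      show ((B.restrict S hS).op^[n] ((B.restrict S hS).op x)).1 = _
      exact ih _

lemma cyc_restrict (x : ↥S) : (B.restrict S hS).cyc x ↔ B.cyc x.1 := by
  constructor
  · rintro ⟨n, hn⟩
    exact ⟨n, by rw [← restrict_iter hS, hn]⟩
  · rintro ⟨n, hn⟩
    exact ⟨n, Subtype.ext (by rw [restrict_iter hS, hn])⟩

lemma reaches_restrict (x : ↥S) : (B.restrict S hS).reaches x ↔ B.reaches x.1 := by
  constructor
  · rintro ⟨k, hk⟩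
    refine ⟨k, ?_⟩
    rw [← restrict_iter hS k x]
    exact (cyc_restrict hS _).1 hk
  · rintro ⟨k, hk⟩
    refine ⟨k, (cyc_restrict hS _).2 ?_⟩
    rwa [restrict_iter hS k x]

lemma conn2_restrict (x y : ↥S) : (B.restrict S hS).conn2 x y ↔ B.conn2 x.1 y.1 := by
  constructor
  · rintro ⟨k, m, h⟩
    exact ⟨k, m, by rw [← restrict_iter hS, ← restrict_iter hS, h]⟩
  · rintro ⟨k, m, h⟩
    exact ⟨k, m, Subtype.ext (by rw [restrict_iter hS, restrict_iter hS, h])⟩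

lemma term_restrict (x : ↥S) : (B.restrict S hS).term x ↔ B.term x.1 := by
  unfold term
  rw [cyc_restrict hS, reaches_restrict hS]

lemma R_restrict {u : Bool} (x y : ↥S) : R u (B.restrict S hS) x y ↔ R u B x.1 y.1 := by
  unfold R
  have hxy : (@Eq (B.restrict S hS).carrier x y) ↔ x.1 = y.1 := Subtype.ext_iff
  rw [hxy, term_restrict hS, term_restrict hS]
  constructor
  · rintro (h | ⟨h1, h2, h3⟩)
    · exact Or.inl h
    · exact Or.inr ⟨h1, h2, fun hu => (conn2_restrict hS x y).1 (h3 hu)⟩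
  · rintro (h | ⟨h1, h2, h3⟩)
    · exact Or.inl h
    · exact Or.inr ⟨h1, h2, fun hu => (conn2_restrict hS x y).2 (h3 hu)⟩

end Restrict

/-! ### The reflection preserves large embeddings -/

lemma LargeEmb_Q {u : Bool} {A B : MonoUnary} (h : LargeEmb A B) :
    LargeEmb (Q u A) (Q u B) := by
  obtain ⟨S, hS, ⟨s0, hs0⟩, hiso, b, hgen⟩ := h
  refine ⟨Quotient.mk (sd u B) '' S, ?_, ⟨Quotient.mk (sd u B) s0, s0, hs0, rfl⟩, ?_, ?_⟩
  · rintro q ⟨x, hx, rfl⟩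
    exact ⟨B.op x, hS x hx, rfl⟩
  · -- Iso (Q u A) (restrict (image))
    have step1 : Iso (Q u A) (Q u (B.restrict S hS)) := Q_iso hiso
    refine step1.trans ?_
    have wd : ∀ (x : ↥S), (⟨Quotient.mk (sd u B) x.1, ⟨x.1, x.2, rfl⟩⟩ :
        ↥(Quotient.mk (sd u B) '' S)) = ⟨Quotient.mk (sd u B) x.1, ⟨x.1, x.2, rfl⟩⟩ := fun _ => rfl
    refine ⟨Equiv.ofBijective
      (Quotient.lift (fun (x : ↥S) => (⟨Quotient.mk (sd u B) x.1, ⟨x.1, x.2, rfl⟩⟩ :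
        ↥(Quotient.mk (sd u B) '' S)))
      (fun a b hab => Subtype.ext (Quotient.sound ((R_restrict hS a b).1 hab)))) ⟨?_, ?_⟩, ?_⟩
    · intro qa qb hq
      induction qa using Quotient.ind with
      | _ a =>
        induction qb using Quotient.ind with
        | _ b =>
          have : Quotient.mk (sd u B) a.1 = Quotient.mk (sd u B) b.1 :=
            congrArg Subtype.val hq
          exact Quotient.sound ((R_restrict hS a b).2 (Quotient.exact this))
    · rintro ⟨q, x, hx, rfl⟩
      exact ⟨Quotient.mk (sd u (B.restrict S hS)) ⟨x, hx⟩, rfl⟩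
    · intro q
      induction q using Quotient.ind with
      | _ a => exact Subtype.ext rfl
  · refine ⟨Quotient.mk (sd u B) b, ?_⟩
    ext q
    simp only [Set.mem_univ, iff_true]
    induction q using Quotient.ind with
    | _ y =>
      have hy : y ∈ B.closure (S ∪ {b}) := by rw [hgen]; trivial
      obtain ⟨x, hx, n, hxy⟩ := hy
      refine ⟨Quotient.mk (sd u B) x, ?_, n, ?_⟩
      · rcases hx with hx | hx
        · exact Or.inl ⟨x, hx, rfl⟩
        · exact Or.inr (by rw [Set.mem_singleton_iff] at hx; subst hx; exact Set.mem_singleton _)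
      · rw [Q_iter, hxy]

lemma Step_Q {u : Bool} {A B : MonoUnary} (h : Step A B) : Step (Q u A) (Q u B) := by
  rcases h with h | h
  · exact Or.inl (LargeEmb_Q h)
  · exact Or.inr (LargeEmb_Q h)

/-! ### Nonemptiness along a path, and attainment of the distance -/

lemma LargeEmb.ne_left {A B : MonoUnary} (h : LargeEmb A B) : Nonempty A.carrier := by
  obtain ⟨S, hS, ⟨s0, hs0⟩, ⟨e, _⟩, _⟩ := h
  exact ⟨e.symm ⟨s0, hs0⟩⟩

lemma LargeEmb.ne_right {A B : MonoUnary} (h : LargeEmb A B) : Nonempty B.carrier := by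
  obtain ⟨S, hS, ⟨s0, hs0⟩, _⟩ := h
  exact ⟨s0⟩

lemma Step.ne_left {A B : MonoUnary} (h : Step A B) : Nonempty A.carrier := by
  rcases h with h | h
  · exact h.ne_left
  · exact h.ne_right

lemma Iso.ne {A B : MonoUnary} (h : Iso A B) (hB : Nonempty B.carrier) :
    Nonempty A.carrier := by
  obtain ⟨e, _⟩ := h
  obtain ⟨x⟩ := hB
  exact ⟨e.symm x⟩

lemma exists_of_dis_lt_top {A B : MonoUnary} (h : dis A B < ⊤) :
    ∃ n : ℕ, (n : ℕ∞) = dis A B ∧ HasPath A B n := by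
  have hne : {q : ℕ∞ | ∃ n : ℕ, q = (n : ℕ∞) ∧ HasPath A B n}.Nonempty := by
    by_contra h'
    rw [Set.not_nonempty_iff_eq_empty] at h'
    rw [dis, h', sInf_empty] at h
    exact absurd h (lt_irrefl _)
  have hmem := csInf_mem hne
  obtain ⟨n, hn, hp⟩ := hmem
  exact ⟨n, by rw [dis, ← hn], hp⟩

end MonoUnary

open MonoUnary in
/-- (1) two forest-algebras at finite distance are connected by some
minimal-length path consisting only of forest-algebras; (2) two tree-algebras at
finite distance are connected by some minimal-length path consisting only of
tree-algebras. -/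
theorem minimal_paths_of_forests_and_trees :
    (∀ F₁ F₂ : MonoUnary, IsForest F₁ → IsForest F₂ → dis F₁ F₂ < ⊤ →
      ∃ n : ℕ, (n : ℕ∞) = dis F₁ F₂ ∧
        ∃ C : ℕ → MonoUnary, Iso (C 0) F₁ ∧ Iso (C n) F₂ ∧
          (∀ i ≤ n, IsForest (C i)) ∧ ∀ i < n, Step (C i) (C (i + 1))) ∧
    (∀ T₁ T₂ : MonoUnary, IsTree T₁ → IsTree T₂ → dis T₁ T₂ < ⊤ →
      ∃ n : ℕ, (n : ℕ∞) = dis T₁ T₂ ∧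
        ∃ C : ℕ → MonoUnary, Iso (C 0) T₁ ∧ Iso (C n) T₂ ∧
          (∀ i ≤ n, IsTree (C i)) ∧ ∀ i < n, Step (C i) (C (i + 1))) := by
  constructor
  · intro F₁ F₂ h1 h2 hlt
    obtain ⟨n, hdis, C, hC0, hCn, hstep⟩ := exists_of_dis_lt_top hlt
    refine ⟨n, hdis, fun i => Q true (C i), ?_, ?_, ?_, ?_⟩
    · exact (Q_iso hC0).trans (Q_iso_self (fun _ _ h => forest_R_eq h1 h))
    · exact (Q_iso hCn).trans (Q_iso_self (fun _ _ h => forest_R_eq h2 h))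
    · exact fun i _ => Q_isForest (C i)
    · exact fun i hi => Step_Q (hstep i hi)
  · intro T₁ T₂ h1 h2 hlt
    obtain ⟨n, hdis, C, hC0, hCn, hstep⟩ := exists_of_dis_lt_top hlt
    have hT₂ : Nonempty T₂.carrier := ⟨h2.2.choose⟩
    have hne : ∀ i ≤ n, Nonempty (C i).carrier := by
      intro i hi
      rcases lt_or_eq_of_le hi with hi | rfl
      · exact (hstep i hi).ne_left
      · exact hCn.ne hT₂
    refine ⟨n, hdis, fun i => Q false (C i), ?_, ?_, ?_, ?_⟩
    · exact (Q_iso hC0).trans (Q_iso_self (fun _ _ h => tree_R_eq h1 h))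
    · exact (Q_iso hCn).trans (Q_iso_self (fun _ _ h => tree_R_eq h2 h))
    · exact fun i hi => Q_isTree (C i) (hne i hi)
    · exact fun i hi => Step_Q (hstep i hi)
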